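/- If P satisfies a margin condition with radius r_0, then for every optimal codebook c* ∈ M and every c ∈ B(0,M)^k with ‖c − c*‖ ≤ B r_0 / (4√2 M), one has ℓ(c,c*) ≥ (p_min/2) ‖c − c*‖², where ‖c − c*‖² = Σ_{i=1}^k ‖c_i − c_i*‖². -/

import Mathlib

open MeasureTheory Metric

noncomputable section

variable {H : Type*} [NormedAddCommGroup H] [InnerProductSpace ℝ H] [MeasurableSpace H]

/-- `qgamma k c x = min_j ‖x - c j‖²`. -/
def qgamma (k : ℕ) (c : Fin k → H) (x : H) : ℝ := ⨅ j : Fin k, ‖x - c j‖ ^ 2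

/-- distortion (risk) of a codebook. -/
def qrisk (k : ℕ) (P : Measure H) (c : Fin k → H) : ℝ := ∫ x, qgamma k c x ∂P

/-- the set of optimal codebooks. -/
def qopt (k : ℕ) (P : Measure H) : Set (Fin k → H) :=
  {c | ∀ c' : Fin k → H, qrisk k P c ≤ qrisk k P c'}

/-- the `i`-th (closed) Voronoi cell of the codebook `c`. -/
def vcell (k : ℕ) (c : Fin k → H) (i : Fin k) : Set H :=
  {x | ∀ j : Fin k, ‖x - c i‖ ≤ ‖x - c j‖}

/-- `B`, the minimal separation between code points of optimal codebooks. -/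
def qB (k : ℕ) (P : Measure H) : ℝ :=
  sInf {b | ∃ c ∈ qopt k P, ∃ i j : Fin k, i ≠ j ∧ b = ‖c i - c j‖}

/-- `p_min`, the minimal mass of a Voronoi cell of an optimal codebook. -/
def qpmin (k : ℕ) (P : Measure H) : ℝ :=
  sInf {p | ∃ c ∈ qopt k P, ∃ i : Fin k, p = (P (vcell k c i)).toReal}

/-- `N_{c*}`, the union of the boundaries between Voronoi cells. -/
def nbd (k : ℕ) (c : Fin k → H) : Set H :=
  ⋃ (i : Fin k) (j : Fin k) (_ : i ≠ j), vcell k c i ∩ vcell k c j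

/-- the weight function `p(t)`, the maximal mass of the closed `t`-neighborhood
of `N_{c*}` over optimal codebooks `c*`. -/
def pweight (k : ℕ) (P : Measure H) (t : ℝ) : ℝ :=
  sSup {p | ∃ c ∈ qopt k P, p = (P (cthickening t (nbd k c))).toReal}

/-- `P` is `M`-bounded: its support is contained in the closed ball `B(0,M)`. -/
def mbounded (P : Measure H) (M : ℝ) : Prop := P (closedBall (0 : H) M)ᶜ = 0

/-- the support of `P` contains more than `k` points. -/
def suppGT (P : Measure H) (k : ℕ) : Prop :=
  ∀ S : Finset H, S.card ≤ k → P ((S : Set H)ᶜ) ≠ 0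

/-- the margin condition with radius `r0`. -/
def margin (k : ℕ) (P : Measure H) (M r0 : ℝ) : Prop :=
  0 < r0 ∧ mbounded P M ∧
    ∀ t : ℝ, 0 ≤ t → t ≤ r0 → pweight k P t ≤ qB k P * qpmin k P * t / (128 * M ^ 2)


set_option linter.unusedSectionVars false

namespace QAux

variable {H : Type*} [NormedAddCommGroup H] [InnerProductSpace ℝ H] [MeasurableSpace H]
variable {k : ℕ} {P : Measure H} {M : ℝ}

lemma isClosed_vcell (c : Fin k → H) (i : Fin k) : IsClosed (vcell k c i) := by
  have h : vcell k c i = ⋂ j, {x : H | ‖x - c i‖ ≤ ‖x - c j‖} := by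
    ext x; simp [vcell, Set.mem_iInter]
  rw [h]
  exact isClosed_iInter fun j => isClosed_le (by fun_prop) (by fun_prop)

lemma measurableSet_vcell [OpensMeasurableSpace H] (c : Fin k → H) (i : Fin k) :
    MeasurableSet (vcell k c i) := (isClosed_vcell c i).measurableSet

/-- disjointified Voronoi cells -/
def wcell (k : ℕ) (c : Fin k → H) (i : Fin k) : Set H :=
  vcell k c i \ ⋃ (j : Fin k) (_ : j < i), vcell k c j

lemma wcell_subset (c : Fin k → H) (i : Fin k) : wcell k c i ⊆ vcell k c i :=
  Set.diff_subset

lemma measurableSet_wcell [OpensMeasurableSpace H] (c : Fin k → H) (i : Fin k) :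
    MeasurableSet (wcell k c i) :=
  (measurableSet_vcell c i).diff
    (MeasurableSet.iUnion fun j => MeasurableSet.iUnion fun _ => measurableSet_vcell c j)

lemma wcell_disjoint (c : Fin k → H) : Pairwise (Function.onFun Disjoint (wcell k c)) := by
  intro i j hij
  rcases hij.lt_or_gt with h | h
  · refine Set.disjoint_left.2 fun x hxi hxj => ?_
    exact hxj.2 (Set.mem_iUnion.2 ⟨i, Set.mem_iUnion.2 ⟨h, hxi.1⟩⟩)
  · refine Set.disjoint_left.2 fun x hxi hxj => ?_
    exact hxi.2 (Set.mem_iUnion.2 ⟨j, Set.mem_iUnion.2 ⟨h, hxj.1⟩⟩)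

lemma exists_mem_vcell (hk0 : 0 < k) (c : Fin k → H) (x : H) : ∃ j, x ∈ vcell k c j := by
  haveI : Nonempty (Fin k) := ⟨⟨0, hk0⟩⟩
  obtain ⟨j, -, hj⟩ := Finset.exists_min_image Finset.univ (fun j => ‖x - c j‖)
    ⟨Classical.arbitrary _, Finset.mem_univ _⟩
  exact ⟨j, fun j' => hj j' (Finset.mem_univ _)⟩

lemma iUnion_wcell (hk0 : 0 < k) (c : Fin k → H) : (⋃ i, wcell k c i) = Set.univ := by
  refine Set.eq_univ_of_forall fun x => ?_
  classical
  obtain ⟨j, hj⟩ := exists_mem_vcell hk0 c x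
  set F : Finset (Fin k) := Finset.univ.filter (fun i => x ∈ vcell k c i) with hF
  have hne : F.Nonempty := ⟨j, by simp [hF, hj]⟩
  set i0 := F.min' hne with hi0
  have hi0m : x ∈ vcell k c i0 := by
    have h1 := F.min'_mem hne
    simp only [hF, Finset.mem_filter] at h1
    exact h1.2
  refine Set.mem_iUnion.2 ⟨i0, hi0m, ?_⟩
  intro hmem
  rw [Set.mem_iUnion] at hmem
  obtain ⟨l, hl⟩ := hmem
  rw [Set.mem_iUnion] at hl
  obtain ⟨hlt, hxl⟩ := hl
  have : i0 ≤ l := F.min'_le l (by simp [hF, hxl])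
  exact absurd hlt (not_lt.2 this)

lemma qgamma_nonneg (c : Fin k → H) (x : H) : 0 ≤ qgamma k c x :=
  Real.iInf_nonneg fun j => by positivity

lemma qgamma_le (c : Fin k → H) (x : H) (j : Fin k) : qgamma k c x ≤ ‖x - c j‖ ^ 2 :=
  ciInf_le ⟨0, by rintro _ ⟨j', rfl⟩; positivity⟩ j

lemma qgamma_eq_of_mem_vcell {c : Fin k → H} {i : Fin k} {x : H} (hx : x ∈ vcell k c i) :
    qgamma k c x = ‖x - c i‖ ^ 2 := by
  haveI : Nonempty (Fin k) := ⟨i⟩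
  refine le_antisymm (qgamma_le c x i) (le_ciInf fun j => ?_)
  exact pow_le_pow_left₀ (norm_nonneg _) (hx j) 2

lemma exists_qgamma_eq (hk0 : 0 < k) (c : Fin k → H) (x : H) :
    ∃ j, x ∈ vcell k c j ∧ qgamma k c x = ‖x - c j‖ ^ 2 := by
  obtain ⟨j, hj⟩ := exists_mem_vcell hk0 c x
  exact ⟨j, hj, qgamma_eq_of_mem_vcell hj⟩

lemma measurable_qgamma [OpensMeasurableSpace H] (c : Fin k → H) :
    Measurable (qgamma k c) :=
  Measurable.iInf fun j =>
    (((continuous_id.sub continuous_const).norm.pow 2).measurable)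


variable {cs : Fin k → H} {r0 : ℝ}

lemma ae_norm_le (hPM : mbounded P M) : ∀ᵐ x ∂P, ‖x‖ ≤ M := by
  rw [ae_iff]
  have h : {x : H | ¬ ‖x‖ ≤ M} = (closedBall (0 : H) M)ᶜ := by
    ext x; simp [mem_closedBall, dist_zero_right]
  rw [h]; exact hPM

lemma integrable_of_bdd [IsFiniteMeasure P] (hPM : mbounded P M)
    {E : Type*} [NormedAddCommGroup E] {f : H → E} (hf : AEStronglyMeasurable f P)
    {C : ℝ} (hC : ∀ x : H, ‖x‖ ≤ M → ‖f x‖ ≤ C) : Integrable f P :=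
  (integrable_const C).mono' hf ((ae_norm_le hPM).mono fun x hx => hC x hx)

lemma integrable_qgamma [OpensMeasurableSpace H] [IsFiniteMeasure P] (hk0 : 0 < k)
    (hPM : mbounded P M) (c : Fin k → H) : Integrable (qgamma k c) P := by
  refine integrable_of_bdd hPM (measurable_qgamma c).aestronglyMeasurable
    (C := (M + ‖c ⟨0, hk0⟩‖) ^ 2) fun x hx => ?_
  rw [Real.norm_of_nonneg (qgamma_nonneg c x)]
  refine (qgamma_le c x ⟨0, hk0⟩).trans ?_
  have h1 : ‖x - c ⟨0, hk0⟩‖ ≤ M + ‖c ⟨0, hk0⟩‖ :=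
    (norm_sub_le _ _).trans (by linarith)
  exact pow_le_pow_left₀ (norm_nonneg _) h1 2

lemma integrable_sub_const [OpensMeasurableSpace H] [SecondCountableTopology H] [IsFiniteMeasure P]
    (hPM : mbounded P M) (b : H) : Integrable (fun x : H => x - b) P := by
  refine integrable_of_bdd hPM
    ((continuous_id.sub continuous_const).aestronglyMeasurable)
    (C := M + ‖b‖) fun x hx => (norm_sub_le _ _).trans (by linarith)

lemma integrable_sq_sub [OpensMeasurableSpace H] [IsFiniteMeasure P]
    (hPM : mbounded P M) (b : H) : Integrable (fun x : H => ‖x - b‖ ^ 2) P := by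
  refine integrable_of_bdd hPM
    (((continuous_id.sub continuous_const).norm.pow 2).aestronglyMeasurable)
    (C := (M + ‖b‖) ^ 2) fun x hx => ?_
  rw [Real.norm_of_nonneg (by positivity)]
  exact pow_le_pow_left₀ (norm_nonneg _) ((norm_sub_le _ _).trans (by linarith)) 2

lemma integral_eq_sum_wcell [OpensMeasurableSpace H] (hk0 : 0 < k)
    {f : H → ℝ} (hf : Integrable f P) (cs : Fin k → H) :
    ∫ x, f x ∂P = ∑ i, ∫ x in wcell k cs i, f x ∂P := by
  have h1 : ∫ x, f x ∂P = ∫ x in ⋃ i, wcell k cs i, f x ∂P := by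
    rw [iUnion_wcell hk0, Measure.restrict_univ]
  rw [h1, integral_iUnion (fun i => measurableSet_wcell cs i) (wcell_disjoint cs)
    hf.integrableOn, tsum_fintype]

lemma pweight_bddAbove [IsProbabilityMeasure P] (t : ℝ) :
    BddAbove {p | ∃ c ∈ qopt k P, p = (P (cthickening t (nbd k c))).toReal} := by
  refine ⟨1, ?_⟩
  rintro p ⟨c, hc, rfl⟩
  have := ENNReal.toReal_mono (by simp) (measure_mono (Set.subset_univ (cthickening t (nbd k c))) : P _ ≤ P Set.univ)
  simpa using this

lemma measure_thickening_le [IsProbabilityMeasure P] (hmargin : margin k P M r0)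
    (hcs : cs ∈ qopt k P) {t : ℝ} (ht : 0 ≤ t) (htr : t ≤ r0) :
    (P (cthickening t (nbd k cs))).toReal ≤ qB k P * qpmin k P * t / (128 * M ^ 2) := by
  refine le_trans ?_ (hmargin.2.2 t ht htr)
  exact le_csSup (pweight_bddAbove t) ⟨cs, hcs, rfl⟩

lemma nbd_null [IsProbabilityMeasure P] (hmargin : margin k P M r0)
    (hcs : cs ∈ qopt k P) : P (nbd k cs) = 0 := by
  have h0 := measure_thickening_le hmargin hcs le_rfl hmargin.1.le
  rw [mul_zero, zero_div] at h0
  have h1 : (P (cthickening 0 (nbd k cs))).toReal = 0 :=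
    le_antisymm h0 ENNReal.toReal_nonneg
  have h2 : P (cthickening 0 (nbd k cs)) = 0 := by
    rcases (ENNReal.toReal_eq_zero_iff _).1 h1 with h | h
    · exact h
    · exact absurd h (measure_ne_top P _)
  rw [cthickening_zero] at h2
  exact measure_mono_null subset_closure h2

lemma vcell_inter_subset_nbd {i j : Fin k} (hij : j ≠ i) {x : H}
    (hxi : x ∈ vcell k cs i) (hxj : x ∈ vcell k cs j) : x ∈ nbd k cs := by
  refine Set.mem_iUnion.2 ⟨i, Set.mem_iUnion.2 ⟨j, Set.mem_iUnion.2 ⟨?_, hxi, hxj⟩⟩⟩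
  exact fun h => hij h.symm

lemma measure_wcell_eq [IsProbabilityMeasure P] (hmargin : margin k P M r0)
    (hcs : cs ∈ qopt k P) (i : Fin k) : P (wcell k cs i) = P (vcell k cs i) := by
  have hdiff : P (vcell k cs i \ wcell k cs i) = 0 := by
    refine measure_mono_null ?_ (nbd_null hmargin hcs)
    rintro x ⟨hxi, hxw⟩
    have : x ∈ ⋃ (j : Fin k) (_ : j < i), vcell k cs j := by
      by_contra hcon
      exact hxw ⟨hxi, hcon⟩
    rw [Set.mem_iUnion] at this
    obtain ⟨j, hj⟩ := this
    rw [Set.mem_iUnion] at hj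
    obtain ⟨hjlt, hxj⟩ := hj
    exact vcell_inter_subset_nbd hjlt.ne hxi hxj
  refine le_antisymm (measure_mono (wcell_subset cs i)) ?_
  calc P (vcell k cs i) = P (wcell k cs i ∪ vcell k cs i \ wcell k cs i) := by
        rw [Set.union_diff_cancel (wcell_subset cs i)]
    _ ≤ P (wcell k cs i) + P (vcell k cs i \ wcell k cs i) := measure_union_le _ _
    _ = P (wcell k cs i) := by rw [hdiff, add_zero]

lemma setint_expand [OpensMeasurableSpace H] [SecondCountableTopology H] [CompleteSpace H]
    [IsFiniteMeasure P] (hPM : mbounded P M) {W : Set H} (hW : MeasurableSet W)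
    (b v : H) :
    ∫ x in W, (‖x - b - v‖ ^ 2 - ‖x - b‖ ^ 2) ∂P
      = (P W).toReal * ‖v‖ ^ 2 - 2 * (inner ℝ v (∫ x in W, (x - b) ∂P) : ℝ) := by
  have hint : Integrable (fun x : H => x - b) (P.restrict W) :=
    (integrable_sub_const hPM b).restrict
  have hptw : ∀ x : H, ‖x - b - v‖ ^ 2 - ‖x - b‖ ^ 2
      = ‖v‖ ^ 2 - 2 * (inner ℝ v (x - b) : ℝ) := by
    intro x
    have h := norm_sub_sq_real (x - b) v
    rw [h, real_inner_comm]
    ring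
  simp only [hptw]
  rw [integral_sub (integrable_const _) ((hint.const_inner v).const_mul 2),
    setIntegral_const, measureReal_def, integral_const_mul, integral_inner hint v, smul_eq_mul]

lemma qgamma_update_le (hk0 : 0 < k) {i : Fin k} (a : H) {x : H}
    (hx : x ∉ wcell k cs i) :
    qgamma k (Function.update cs i a) x ≤ qgamma k cs x := by
  classical
  have hj : ∃ j, j ≠ i ∧ x ∈ vcell k cs j := by
    by_cases hvi : x ∈ vcell k cs i
    · have : x ∈ ⋃ (j : Fin k) (_ : j < i), vcell k cs j := by
        by_contra hcon; exact hx ⟨hvi, hcon⟩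
      rw [Set.mem_iUnion] at this
      obtain ⟨j, hj⟩ := this
      rw [Set.mem_iUnion] at hj
      exact ⟨j, hj.1.ne, hj.2⟩
    · obtain ⟨j, hj⟩ := exists_mem_vcell hk0 cs x
      exact ⟨j, fun h => hvi (h ▸ hj), hj⟩
  obtain ⟨j, hji, hxj⟩ := hj
  have h1 : qgamma k (Function.update cs i a) x ≤ ‖x - Function.update cs i a j‖ ^ 2 :=
    qgamma_le _ x j
  rw [Function.update_of_ne hji] at h1
  rw [qgamma_eq_of_mem_vcell hxj]
  exact h1

lemma centroid [OpensMeasurableSpace H] [SecondCountableTopology H] [CompleteSpace H]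
    [IsProbabilityMeasure P] (hk0 : 0 < k) (hPM : mbounded P M)
    (hcs : cs ∈ qopt k P) (i : Fin k) :
    ∫ x in wcell k cs i, (x - cs i) ∂P = 0 := by
  classical
  set W := wcell k cs i with hWdef
  have hW : MeasurableSet W := measurableSet_wcell cs i
  set m := ∫ x in W, (x - cs i) ∂P with hm
  set a := cs i + m with ha
  set g : H → ℝ := fun x => ‖x - a‖ ^ 2 - ‖x - cs i‖ ^ 2 with hg
  have hIg : Integrable g P := (integrable_sq_sub hPM a).sub (integrable_sq_sub hPM (cs i))
  have hpt : ∀ x, qgamma k (Function.update cs i a) x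
      ≤ qgamma k cs x + W.indicator g x := by
    intro x
    by_cases hxW : x ∈ W
    · rw [Set.indicator_of_mem hxW, hg]
      have h2 : qgamma k cs x = ‖x - cs i‖ ^ 2 :=
        qgamma_eq_of_mem_vcell (wcell_subset cs i hxW)
      have h3 : qgamma k (Function.update cs i a) x ≤ ‖x - a‖ ^ 2 := by
        have := qgamma_le (Function.update cs i a) x i
        rwa [Function.update_self] at this
      rw [h2]; simp only []; linarith
    · rw [Set.indicator_of_notMem hxW, add_zero]
      exact qgamma_update_le hk0 a hxW
  have hInd : Integrable (W.indicator g) P := hIg.indicator hW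
  have h4 : qrisk k P (Function.update cs i a) ≤ qrisk k P cs + ∫ x in W, g x ∂P := by
    have h5 := integral_mono (integrable_qgamma hk0 hPM _)
      ((integrable_qgamma hk0 hPM cs).add hInd) hpt
    simp only [Pi.add_apply] at h5
    rwa [integral_add (integrable_qgamma hk0 hPM cs) hInd, integral_indicator hW] at h5
  have h6 := hcs (Function.update cs i a)
  have h7 : 0 ≤ ∫ x in W, g x ∂P := by
    have : qrisk k P cs ≤ qrisk k P cs + ∫ x in W, g x ∂P := le_trans h6 h4
    linarith
  have h8 : ∫ x in W, g x ∂P = (P W).toReal * ‖m‖ ^ 2 - 2 * (inner ℝ m (m) : ℝ) := by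
    have h9 := setint_expand (W := W) hPM hW (cs i) m
    have h10 : ∀ x : H, g x = ‖x - cs i - m‖ ^ 2 - ‖x - cs i‖ ^ 2 := by
      intro x; rw [hg, ha]; simp only [sub_add_eq_sub_sub]
    simp only [h10]
    rw [h9]
  rw [h8, real_inner_self_eq_norm_sq] at h7
  have hP1 : (P W).toReal ≤ 1 := by
    have := ENNReal.toReal_mono (by simp) (measure_mono (Set.subset_univ W) : P W ≤ P Set.univ)
    simpa using this
  have hm2 : ‖m‖ ^ 2 ≤ 0 := by nlinarith [sq_nonneg ‖m‖]
  have : ‖m‖ = 0 := by nlinarith [norm_nonneg m, sq_nonneg ‖m‖]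
  exact norm_eq_zero.1 this

lemma norm_cs_le [OpensMeasurableSpace H] [SecondCountableTopology H] [CompleteSpace H]
    [IsProbabilityMeasure P] (hk0 : 0 < k) (hPM : mbounded P M) (hM : 0 < M)
    (hcs : cs ∈ qopt k P) (i : Fin k) (hpos : P (wcell k cs i) ≠ 0) : ‖cs i‖ ≤ M := by
  set W := wcell k cs i with hWdef
  have hW : MeasurableSet W := measurableSet_wcell cs i
  have hcent := centroid hk0 hPM hcs i
  have hid : Integrable (fun x : H => x) (P.restrict W) :=
    (integrable_sub_const hPM 0).restrict.congr (by simp)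
  have h1 : ∫ x in W, (x - cs i) ∂P = (∫ x in W, x ∂P) - (P W).toReal • cs i := by
    rw [integral_sub hid (integrable_const _), setIntegral_const, measureReal_def]
  have h2 : ∫ x in W, x ∂P = (P W).toReal • cs i := by
    rw [h1] at hcent; exact sub_eq_zero.1 hcent
  have h3 : ‖∫ x in W, x ∂P‖ ≤ (P W).toReal * M := by
    calc ‖∫ x in W, x ∂P‖ ≤ ∫ x in W, ‖x‖ ∂P := norm_integral_le_integral_norm _
      _ ≤ ∫ _x in W, M ∂P := by
          refine integral_mono_ae hid.norm (integrable_const M) ?_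
          exact ae_restrict_of_ae ((ae_norm_le hPM).mono fun x h => h)
      _ = (P W).toReal * M := by rw [setIntegral_const, measureReal_def, smul_eq_mul]
  rw [h2, norm_smul, Real.norm_of_nonneg ENNReal.toReal_nonneg] at h3
  have hPpos : 0 < (P W).toReal := ENNReal.toReal_pos hpos (measure_ne_top P W)
  exact le_of_mul_le_mul_left h3 hPpos

lemma exists_nbd_dist {i j : Fin k} (hij : i ≠ j) (hcc : cs i ≠ cs j)
    {x : H} (hx : x ∈ vcell k cs i) :
    ∃ y ∈ nbd k cs, dist x y ≤ (‖x - cs j‖ ^ 2 - ‖x - cs i‖ ^ 2) / (2 * ‖cs i - cs j‖) := by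
  classical
  set d := ‖cs j - cs i‖ with hd_def
  have hd : 0 < d := by
    rw [hd_def, norm_pos_iff]
    exact sub_ne_zero.2 (Ne.symm hcc)
  set u := d⁻¹ • (cs j - cs i) with hu_def
  have hu : ‖u‖ = 1 := by
    rw [hu_def, norm_smul, Real.norm_eq_abs, abs_inv, abs_of_pos hd, ← hd_def,
      inv_mul_cancel₀ hd.ne']
  set y : ℝ → H := fun s => x + s • u with hy_def
  have hy_cont : Continuous y := by
    rw [hy_def]; exact continuous_const.add (continuous_id.smul continuous_const)
  have hsq : ∀ (s : ℝ) (a : H),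
      ‖y s - a‖ ^ 2 = ‖x - a‖ ^ 2 + 2 * s * (inner ℝ (x - a) u : ℝ) + s ^ 2 := by
    intro s a
    have h1 : y s - a = (x - a) + s • u := by show x + s • u - a = (x - a) + s • u; rw [add_sub_right_comm]
    rw [h1, norm_add_sq_real, real_inner_smul_right, norm_smul, Real.norm_eq_abs,
      mul_pow, sq_abs, hu]
    ring
  have hdiff : ∀ s : ℝ, ‖y s - cs j‖ ^ 2 - ‖y s - cs i‖ ^ 2
      = (‖x - cs j‖ ^ 2 - ‖x - cs i‖ ^ 2) - 2 * s * d := by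
    intro s
    have hinner : (inner ℝ (x - cs j) u : ℝ) - (inner ℝ (x - cs i) u : ℝ) = -d := by
      rw [← inner_sub_left]
      have h2 : x - cs j - (x - cs i) = -(cs j - cs i) := by abel
      rw [h2, inner_neg_left, hu_def, real_inner_smul_right, real_inner_self_eq_norm_sq,
        ← hd_def]
      field_simp [sq]
    have h3 := hsq s (cs j)
    have h4 := hsq s (cs i)
    nlinarith [h3, h4, hinner]
  set s0 := (‖x - cs j‖ ^ 2 - ‖x - cs i‖ ^ 2) / (2 * d) with hs0_def
  have hnum : 0 ≤ ‖x - cs j‖ ^ 2 - ‖x - cs i‖ ^ 2 := by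
    have := hx j
    nlinarith [norm_nonneg (x - cs i), norm_nonneg (x - cs j)]
  have hs0 : 0 ≤ s0 := div_nonneg hnum (by positivity)
  set S := {s : ℝ | s ∈ Set.Icc 0 s0 ∧ y s ∈ vcell k cs i} with hS_def
  have hS_closed : IsClosed S := by
    have : S = Set.Icc 0 s0 ∩ y ⁻¹' (vcell k cs i) := rfl
    rw [this]
    exact isClosed_Icc.inter ((isClosed_vcell cs i).preimage hy_cont)
  have hS0 : (0 : ℝ) ∈ S := by
    refine ⟨⟨le_rfl, hs0⟩, ?_⟩
    have : y 0 = x := by rw [hy_def]; simp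
    rw [this]; exact hx
  have hSbdd : BddAbove S := ⟨s0, fun s hs => hs.1.2⟩
  set sstar := sSup S with hsstar_def
  have hsmem : sstar ∈ S := hS_closed.csSup_mem ⟨0, hS0⟩ hSbdd
  have hstar_nonneg : 0 ≤ sstar := hsmem.1.1
  have hstar_le : sstar ≤ s0 := hsmem.1.2
  have hdist : dist x (y sstar) = sstar := by
    rw [hy_def, dist_eq_norm]
    have h9 : x - (x + sstar • u) = -(sstar • u) := by abel
    rw [h9, norm_neg, norm_smul, hu, mul_one, Real.norm_eq_abs, abs_of_nonneg hstar_nonneg]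
  have hmain : y sstar ∈ nbd k cs := by
    by_cases hcase : ∃ l, l ≠ i ∧ ‖y sstar - cs l‖ ≤ ‖y sstar - cs i‖
    · obtain ⟨l, hli, hle⟩ := hcase
      have heq : ‖y sstar - cs l‖ = ‖y sstar - cs i‖ := le_antisymm hle (hsmem.2 l)
      have hVl : y sstar ∈ vcell k cs l := fun m => by rw [heq]; exact hsmem.2 m
      exact vcell_inter_subset_nbd hli hsmem.2 hVl
    · push_neg at hcase
      exfalso
      have hslt : sstar < s0 := by
        rcases lt_or_eq_of_le hstar_le with h | h
        · exact h
        · exfalso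
          have h5 := hdiff sstar
          rw [h] at h5
          have h6 : 2 * s0 * d = ‖x - cs j‖ ^ 2 - ‖x - cs i‖ ^ 2 := by
            rw [hs0_def]; field_simp
          have h8 := hcase j (Ne.symm hij)
          rw [h] at h8
          nlinarith [h5, h6, h8, norm_nonneg (y s0 - cs j), norm_nonneg (y s0 - cs i)]
      have hev : ∀ᶠ s in nhds sstar, y s ∈ vcell k cs i := by
        have hall : ∀ l : Fin k, ∀ᶠ s in nhds sstar, ‖y s - cs i‖ ≤ ‖y s - cs l‖ := by
          intro l
          by_cases hl : l = i
          · subst hl; exact Filter.Eventually.of_forall fun s => le_rfl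
          · have hopen : IsOpen {s : ℝ | ‖y s - cs i‖ < ‖y s - cs l‖} :=
              isOpen_lt (hy_cont.sub continuous_const).norm (hy_cont.sub continuous_const).norm
            have hmem : sstar ∈ {s : ℝ | ‖y s - cs i‖ < ‖y s - cs l‖} := hcase l hl
            exact Filter.eventually_of_mem (hopen.mem_nhds hmem) fun s hs => hs.le
        exact (Filter.eventually_all.2 hall).mono fun s hs l => hs l
      have hev2 : ∀ᶠ s in nhds sstar, s < s0 := eventually_lt_nhds hslt
      have hcomb : ∀ᶠ s in nhdsWithin sstar (Set.Ioi sstar),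
          y s ∈ vcell k cs i ∧ s < s0 ∧ sstar < s := by
        refine ((hev.filter_mono nhdsWithin_le_nhds).and
          ((hev2.filter_mono nhdsWithin_le_nhds).and self_mem_nhdsWithin)).mono ?_
        intro s hs; exact ⟨hs.1, hs.2.1, hs.2.2⟩
      obtain ⟨s, hs1, hs2, hs3⟩ := hcomb.exists
      have hsS : s ∈ S := ⟨⟨hstar_nonneg.trans hs3.le, hs2.le⟩, hs1⟩
      exact absurd (le_csSup hSbdd hsS) (not_le.2 hs3)
  refine ⟨y sstar, hmain, ?_⟩
  rw [hdist]
  have : ‖cs i - cs j‖ = d := by rw [hd_def, norm_sub_rev]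
  rw [this]
  exact hstar_le

lemma sq_diff_bound {x a b : H} {M : ℝ} (hx : ‖x‖ ≤ M) (ha : ‖a‖ ≤ M) (hb : ‖b‖ ≤ M) :
    |‖x - a‖ ^ 2 - ‖x - b‖ ^ 2| ≤ 4 * M * ‖a - b‖ := by
  have h1 : |‖x - a‖ - ‖x - b‖| ≤ ‖a - b‖ := by
    have h := abs_norm_sub_norm_le (x - a) (x - b)
    have h2 : x - a - (x - b) = b - a := by abel
    rw [h2] at h
    rw [norm_sub_rev b a] at h
    exact h
  have h3 : ‖x - a‖ ≤ 2 * M := (norm_sub_le _ _).trans (by linarith)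
  have h4 : ‖x - b‖ ≤ 2 * M := (norm_sub_le _ _).trans (by linarith)
  have h5 := abs_le.1 h1
  rw [abs_le]
  constructor <;>
    nlinarith [norm_nonneg (x - a), norm_nonneg (x - b), norm_nonneg (a - b), h5.1, h5.2]

lemma pair_bound {c cs : Fin k → H} {i j : Fin k} (hij : i ≠ j) :
    ‖c i - cs i‖ + ‖c j - cs j‖
      ≤ Real.sqrt 2 * Real.sqrt (∑ l, ‖c l - cs l‖ ^ 2) := by
  classical
  have h1 : ‖c i - cs i‖ ^ 2 + ‖c j - cs j‖ ^ 2 ≤ ∑ l, ‖c l - cs l‖ ^ 2 := by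
    have h := Finset.sum_le_sum_of_subset_of_nonneg
      (Finset.subset_univ ({i, j} : Finset (Fin k))) (fun l _ _ => sq_nonneg ‖c l - cs l‖)
    rwa [Finset.sum_pair hij] at h
  have h2 : (‖c i - cs i‖ + ‖c j - cs j‖) ^ 2 ≤ 2 * ∑ l, ‖c l - cs l‖ ^ 2 := by
    nlinarith [sq_nonneg (‖c i - cs i‖ - ‖c j - cs j‖)]
  calc ‖c i - cs i‖ + ‖c j - cs j‖
      = Real.sqrt ((‖c i - cs i‖ + ‖c j - cs j‖) ^ 2) := by
        rw [Real.sqrt_sq (by positivity)]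
    _ ≤ Real.sqrt (2 * ∑ l, ‖c l - cs l‖ ^ 2) := Real.sqrt_le_sqrt h2
    _ = Real.sqrt 2 * Real.sqrt (∑ l, ‖c l - cs l‖ ^ 2) := Real.sqrt_mul (by norm_num) _

end QAux

set_option maxHeartbeats 1000000 in
open QAux in
/-- Proposition 2.2 (i): local strong convexity of the distortion near optimal
codebooks, under the margin condition. -/
theorem stmt1 [BorelSpace H] [SecondCountableTopology H] [CompleteSpace H]
    (k : ℕ) (hk : 2 ≤ k) (P : Measure H) [IsProbabilityMeasure P]
    (M : ℝ) (hM : 0 < M) (hsupp : suppGT P k) (hne : (qopt k P).Nonempty)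
    (r0 : ℝ) (hmargin : margin k P M r0) :
    ∀ cs ∈ qopt k P, ∀ c : Fin k → H, (∀ i, ‖c i‖ ≤ M) →
      Real.sqrt (∑ i, ‖c i - cs i‖ ^ 2) ≤ qB k P * r0 / (4 * Real.sqrt 2 * M) →
      qpmin k P / 2 * (∑ i, ‖c i - cs i‖ ^ 2) ≤ qrisk k P c - qrisk k P cs := by
  intro cs hcs c hcM hdist
  have hk0 : 0 < k := by omega
  have hSig0 : (0 : ℝ) ≤ ∑ i, ‖c i - cs i‖ ^ 2 :=
    Finset.sum_nonneg fun i _ => sq_nonneg ‖c i - cs i‖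
  have hRpos : 0 ≤ qrisk k P c - qrisk k P cs := sub_nonneg.2 (hcs c)
  by_cases hqp : qpmin k P ≤ 0
  · nlinarith
  push_neg at hqp
  have hr0 : 0 < r0 := hmargin.1
  have hPM : mbounded P M := hmargin.2.1
  have hs2 : (0 : ℝ) < Real.sqrt 2 := Real.sqrt_pos.2 (by norm_num)
  have hs2sq : Real.sqrt 2 ^ 2 = 2 := Real.sq_sqrt (by norm_num)
  by_cases hqB : qB k P ≤ 0
  · have h1 : qB k P * r0 / (4 * Real.sqrt 2 * M) ≤ 0 :=
      div_nonpos_iff.2 (Or.inr ⟨mul_nonpos_of_nonpos_of_nonneg hqB hr0.le, by positivity⟩)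
    have h2 : Real.sqrt (∑ i, ‖c i - cs i‖ ^ 2) = 0 :=
      le_antisymm (hdist.trans h1) (Real.sqrt_nonneg _)
    have h3 : ∑ i, ‖c i - cs i‖ ^ 2 = 0 :=
      le_antisymm (Real.sqrt_eq_zero'.1 h2) hSig0
    rw [h3, mul_zero]
    exact hRpos
  push_neg at hqB
  -- abbreviations
  set A := Real.sqrt (∑ i, ‖c i - cs i‖ ^ 2) with hA_def
  have hA0 : 0 ≤ A := Real.sqrt_nonneg _
  have hA_sq : A ^ 2 = ∑ i, ‖c i - cs i‖ ^ 2 := Real.sq_sqrt hSig0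
  set K := 4 * Real.sqrt 2 * M * A with hK_def
  have hK0 : 0 ≤ K := by positivity
  set t := K / (2 * qB k P) with ht_def
  have ht0 : 0 ≤ t := div_nonneg hK0 (by positivity)
  have htr0 : t ≤ r0 := by
    have h4 : A * (4 * Real.sqrt 2 * M) ≤ qB k P * r0 :=
      (le_div_iff₀ (by positivity)).1 hdist
    rw [ht_def, div_le_iff₀ (by positivity), hK_def]
    nlinarith [h4, mul_nonneg hqB.le hr0.le]
  -- cell measures
  have hwv : ∀ i, P (wcell k cs i) = P (vcell k cs i) :=
    fun i => measure_wcell_eq hmargin hcs i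
  have hpm_le : ∀ i, qpmin k P ≤ (P (wcell k cs i)).toReal := by
    intro i
    rw [hwv i]
    refine csInf_le ⟨0, ?_⟩ ⟨cs, hcs, i, rfl⟩
    rintro p ⟨c', hc', i', rfl⟩
    exact ENNReal.toReal_nonneg
  have hwpos : ∀ i, P (wcell k cs i) ≠ 0 := by
    intro i h0
    have := hpm_le i
    rw [h0] at this
    simp at this
    linarith
  have hcsM : ∀ i, ‖cs i‖ ≤ M := fun i => norm_cs_le hk0 hPM hM hcs i (hwpos i)
  have hqBle : ∀ i j : Fin k, i ≠ j → qB k P ≤ ‖cs i - cs j‖ := by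
    intro i j hij
    refine csInf_le ⟨0, ?_⟩ ⟨cs, hcs, i, j, hij, rfl⟩
    rintro b ⟨c', hc', i', j', hij', rfl⟩
    exact norm_nonneg _
  have hcsne : ∀ i j : Fin k, i ≠ j → cs i ≠ cs j := by
    intro i j hij heq
    have := hqBle i j hij
    rw [heq, sub_self, norm_zero] at this
    linarith
  set T := cthickening t (nbd k cs) with hT_def
  have hTmeas : MeasurableSet T := (isClosed_cthickening).measurableSet
  have hPT : (P T).toReal ≤ qB k P * qpmin k P * t / (128 * M ^ 2) :=
    measure_thickening_le hmargin hcs ht0 htr0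
  -- pointwise bound
  have hptw : ∀ (i : Fin k) (x : H), x ∈ wcell k cs i → ‖x‖ ≤ M →
      ‖x - c i‖ ^ 2 - qgamma k c x ≤ T.indicator (fun _ => K) x := by
    intro i x hxW hxM
    by_cases hpos : ‖x - c i‖ ^ 2 - qgamma k c x ≤ 0
    · exact hpos.trans (Set.indicator_apply_nonneg fun _ => hK0)
    push_neg at hpos
    obtain ⟨j, hxj, hqj⟩ := exists_qgamma_eq hk0 c x
    have hlt : ‖x - c j‖ ^ 2 < ‖x - c i‖ ^ 2 := by rw [← hqj]; linarith
    have hji : j ≠ i := by rintro rfl; exact lt_irrefl _ hlt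
    have hxVi : x ∈ vcell k cs i := wcell_subset cs i hxW
    have hb1 := sq_diff_bound (a := c i) (b := cs i) hxM (hcM i) (hcsM i)
    have hb2 := sq_diff_bound (a := c j) (b := cs j) hxM (hcM j) (hcsM j)
    have hpair : ‖c i - cs i‖ + ‖c j - cs j‖ ≤ Real.sqrt 2 * A :=
      pair_bound (Ne.symm hji)
    have hVii : ‖x - cs i‖ ≤ ‖x - cs j‖ := hxVi j
    have hViisq : ‖x - cs i‖ ^ 2 ≤ ‖x - cs j‖ ^ 2 :=
      pow_le_pow_left₀ (norm_nonneg _) hVii 2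
    have hb1' := abs_le.1 hb1
    have hb2' := abs_le.1 hb2
    have hp4 : 4 * M * ‖c i - cs i‖ + 4 * M * ‖c j - cs j‖ ≤ 4 * Real.sqrt 2 * M * A := by
      nlinarith [mul_le_mul_of_nonneg_left hpair (show (0:ℝ) ≤ 4 * M by positivity)]
    have hfK : ‖x - c i‖ ^ 2 - ‖x - c j‖ ^ 2 ≤ K := by
      rw [hK_def]
      linarith [hb1'.2, hb2'.1, hViisq, hp4]
    have hnum : ‖x - cs j‖ ^ 2 - ‖x - cs i‖ ^ 2 ≤ K := by
      rw [hK_def]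
      linarith [hb2'.1, hb1'.2, hlt, hp4]
    obtain ⟨yb, hyb, hyd⟩ := exists_nbd_dist (Ne.symm hji) (hcsne i j (Ne.symm hji)) hxVi
    have hdT : dist x yb ≤ t := by
      refine hyd.trans ?_
      rw [ht_def]
      refine div_le_div₀ hK0 hnum (by positivity) ?_
      have := hqBle i j (Ne.symm hji)
      linarith
    have hxT : x ∈ T := by
      rw [hT_def]
      exact mem_cthickening_of_dist_le x yb t _ hyb hdT
    rw [Set.indicator_of_mem hxT, hqj]
    exact hfK
  -- integral bounds
  have hBint : ∀ i, ∫ x in wcell k cs i, (‖x - c i‖ ^ 2 - qgamma k c x) ∂P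
      ≤ K * (P (T ∩ wcell k cs i)).toReal := by
    intro i
    have hWm := measurableSet_wcell cs i
    have hint1 : IntegrableOn (fun x => ‖x - c i‖ ^ 2 - qgamma k c x) (wcell k cs i) P :=
      ((integrable_sq_sub hPM (c i)).sub (integrable_qgamma hk0 hPM c)).integrableOn
    have hint2 : IntegrableOn (T.indicator fun _ => K) (wcell k cs i) P :=
      ((integrable_const K).indicator hTmeas).integrableOn
    have hle : ∫ x in wcell k cs i, (‖x - c i‖ ^ 2 - qgamma k c x) ∂P
        ≤ ∫ x in wcell k cs i, T.indicator (fun _ => K) x ∂P := by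
      refine integral_mono_ae hint1 hint2 ?_
      filter_upwards [ae_restrict_mem hWm, ae_restrict_of_ae (ae_norm_le hPM)] with x hxW hxM
      exact hptw i x hxW hxM
    refine hle.trans (le_of_eq ?_)
    rw [setIntegral_indicator hTmeas, setIntegral_const, measureReal_def, smul_eq_mul, Set.inter_comm, mul_comm]
  have hAint : ∀ i, ∫ x in wcell k cs i, (‖x - c i‖ ^ 2 - ‖x - cs i‖ ^ 2) ∂P
      = (P (wcell k cs i)).toReal * ‖c i - cs i‖ ^ 2 := by
    intro i
    have h1 := setint_expand hPM (measurableSet_wcell cs i) (cs i) (c i - cs i)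
    have h2 : ∀ x : H, x - cs i - (c i - cs i) = x - c i := fun x => by abel
    simp only [h2] at h1
    rw [h1, centroid hk0 hPM hcs i, inner_zero_right, mul_zero, sub_zero]
  -- decomposition
  have hdec : qrisk k P c - qrisk k P cs
      = ∑ i, ∫ x in wcell k cs i, (qgamma k c x - ‖x - cs i‖ ^ 2) ∂P := by
    have e1 : qrisk k P c = ∑ i, ∫ x in wcell k cs i, qgamma k c x ∂P :=
      integral_eq_sum_wcell hk0 (integrable_qgamma hk0 hPM c) cs
    have e2 : qrisk k P cs = ∑ i, ∫ x in wcell k cs i, qgamma k cs x ∂P :=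
      integral_eq_sum_wcell hk0 (integrable_qgamma hk0 hPM cs) cs
    rw [e1, e2, ← Finset.sum_sub_distrib]
    refine Finset.sum_congr rfl fun i _ => ?_
    have e3 : ∫ x in wcell k cs i, qgamma k cs x ∂P
        = ∫ x in wcell k cs i, ‖x - cs i‖ ^ 2 ∂P := by
      refine setIntegral_congr_fun (measurableSet_wcell cs i) fun x hx => ?_
      exact qgamma_eq_of_mem_vcell (wcell_subset cs i hx)
    rw [e3, ← integral_sub ((integrable_qgamma hk0 hPM c).integrableOn)
      ((integrable_sq_sub hPM (cs i)).integrableOn)]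
  -- per-cell lower bound
  have hper : ∀ i, qpmin k P * ‖c i - cs i‖ ^ 2 - K * (P (T ∩ wcell k cs i)).toReal
      ≤ ∫ x in wcell k cs i, (qgamma k c x - ‖x - cs i‖ ^ 2) ∂P := by
    intro i
    have hI1 : IntegrableOn (fun x => ‖x - c i‖ ^ 2 - ‖x - cs i‖ ^ 2) (wcell k cs i) P :=
      ((integrable_sq_sub hPM (c i)).sub (integrable_sq_sub hPM (cs i))).integrableOn
    have hI2 : IntegrableOn (fun x => ‖x - c i‖ ^ 2 - qgamma k c x) (wcell k cs i) P :=
      ((integrable_sq_sub hPM (c i)).sub (integrable_qgamma hk0 hPM c)).integrableOn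
    have hsplit : ∫ x in wcell k cs i, (qgamma k c x - ‖x - cs i‖ ^ 2) ∂P
        = (∫ x in wcell k cs i, (‖x - c i‖ ^ 2 - ‖x - cs i‖ ^ 2) ∂P)
          - ∫ x in wcell k cs i, (‖x - c i‖ ^ 2 - qgamma k c x) ∂P := by
      rw [← integral_sub hI1 hI2]
      refine integral_congr_ae (Filter.Eventually.of_forall fun x => ?_)
      ring
    rw [hsplit, hAint i]
    have h6 := hBint i
    have h7 := hpm_le i
    nlinarith [sq_nonneg ‖c i - cs i‖]
  -- sum over cells
  have hTuni : T = ⋃ i, T ∩ wcell k cs i := by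
    rw [← Set.inter_iUnion, iUnion_wcell hk0, Set.inter_univ]
  have hTsum : (P T).toReal = ∑ i, (P (T ∩ wcell k cs i)).toReal := by
    have hdisj : Pairwise (Function.onFun Disjoint fun i => T ∩ wcell k cs i) := by
      intro i1 i2 h12
      have hd0 := wcell_disjoint cs h12
      exact Set.disjoint_left.2 fun x hx1 hx2 =>
        (Set.disjoint_left.1 hd0) hx1.2 hx2.2
    have hmeas : ∀ i, MeasurableSet (T ∩ wcell k cs i) :=
      fun i => hTmeas.inter (measurableSet_wcell cs i)
    have h1 : P T = ∑' i, P (T ∩ wcell k cs i) := by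
      conv_lhs => rw [hTuni]
      exact measure_iUnion hdisj hmeas
    rw [h1, tsum_fintype]
    exact ENNReal.toReal_sum fun i _ => measure_ne_top P _
  have hsum : qpmin k P * (∑ i, ‖c i - cs i‖ ^ 2) - K * (P T).toReal
      ≤ qrisk k P c - qrisk k P cs := by
    rw [hdec, hTsum, Finset.mul_sum, Finset.mul_sum, ← Finset.sum_sub_distrib]
    exact Finset.sum_le_sum fun i _ => hper i
  -- final numeric
  have hKey : K * (qB k P * qpmin k P * t / (128 * M ^ 2)) = qpmin k P * A ^ 2 / 8 := by
    have ht_eq : t = 2 * Real.sqrt 2 * M * A / qB k P := by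
      rw [ht_def, hK_def]; field_simp; ring
    rw [hK_def, ht_eq]
    field_simp
    linear_combination (64 * A ^ 2) * hs2sq
  have hmul : 0 ≤ qpmin k P * (∑ i, ‖c i - cs i‖ ^ 2) := mul_nonneg hqp.le hSig0
  have hKP : K * (P T).toReal ≤ qpmin k P * A ^ 2 / 8 := by
    rw [← hKey]
    exact mul_le_mul_of_nonneg_left hPT hK0
  rw [hA_sq] at hKP
  linarith
end
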